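/- For x ≥ 2, one has x·Li(x) − ∫₂^x Li(t) dt = Li(x²) + O(1), where Li(u) = ∫₂^u dt/log t. -/

import Mathlib

open intervalIntegral MeasureTheory

noncomputable def Li (u : ℝ) : ℝ := ∫ t in (2 : ℝ)..u, 1 / Real.log t

open Set MeasureTheory in
private lemma cont1 : ContinuousOn (fun t : ℝ => 1 / Real.log t) (Set.Ioi 1) := by
  intro t ht
  have h1 : (1:ℝ) < t := ht
  exact (ContinuousAt.div continuousAt_const (Real.continuousAt_log (by linarith))
    (ne_of_gt (Real.log_pos h1))).continuousWithinAt

open Set MeasureTheory in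
private lemma Li_deriv {t : ℝ} (ht : 1 < t) :
    HasDerivAt Li (1 / Real.log t) t := by
  have hInt : IntervalIntegrable (fun s : ℝ => 1 / Real.log s) volume 2 t := by
    apply (cont1.mono ?_).intervalIntegrable
    intro s hs
    rcases le_total (2:ℝ) t with h | h
    · rw [uIcc_of_le h] at hs; exact lt_of_lt_of_le one_lt_two hs.1
    · rw [uIcc_of_ge h] at hs; exact lt_of_lt_of_le ht hs.1
  exact intervalIntegral.integral_hasDerivAt_right hInt
    (cont1.stronglyMeasurableAtFilter isOpen_Ioi t ht)
    (cont1.continuousAt (isOpen_Ioi.mem_nhds ht))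

theorem Li_partial_summation_identity :
    ∃ c : ℝ, ∀ x : ℝ, 2 ≤ x →
      |(x * Li x - ∫ t in (2 : ℝ)..x, Li t) - Li (x ^ 2)| ≤ c := by
  have hs2 : Real.sqrt 2 ^ 2 = 2 := Real.sq_sqrt (by norm_num)
  have hs0 : (0:ℝ) ≤ Real.sqrt 2 := Real.sqrt_nonneg 2
  have hs1 : (1:ℝ) < Real.sqrt 2 := by nlinarith
  have hsle2 : Real.sqrt 2 ≤ 2 := by nlinarith
  refine ⟨|∫ t in (2:ℝ)..Real.sqrt 2, t * (1 / Real.log t)|, fun x hx => ?_⟩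
  have hIoi : ∀ a b : ℝ, 1 < a → a ≤ b → Set.uIcc a b ⊆ Set.Ioi 1 := by
    intro a b ha hab s hs
    rw [Set.uIcc_of_le hab] at hs
    exact lt_of_lt_of_le ha hs.1
  have hIntMul : ∀ a b : ℝ, 1 < a → a ≤ b →
      IntervalIntegrable (fun t : ℝ => t * (1 / Real.log t)) volume a b :=
    fun a b ha hab =>
      (continuousOn_id.mul (cont1.mono (hIoi a b ha hab))).intervalIntegrable
  -- Step A: integration by parts
  have hA : ∫ t in (2:ℝ)..x, t * (1 / Real.log t)
      = x * Li x - 2 * Li 2 - ∫ t in (2:ℝ)..x, 1 * Li t := by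
    apply intervalIntegral.integral_mul_deriv_eq_deriv_mul
      (u := fun t => t) (u' := fun _ => 1) (v := Li) (v' := fun t => 1 / Real.log t)
    · intro t _; exact hasDerivAt_id t
    · intro t ht
      exact Li_deriv (hIoi 2 x one_lt_two hx ht)
    · exact intervalIntegrable_const
    · exact (cont1.mono (hIoi 2 x one_lt_two hx)).intervalIntegrable
  have hLi2 : Li 2 = 0 := intervalIntegral.integral_same
  -- Step B: substitution u = t^2
  have hB : Li (x ^ 2) = ∫ u in (Real.sqrt 2)..x, u * (1 / Real.log u) := by
    have hsx : Real.sqrt 2 ≤ x := le_trans hsle2 hx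
    have hsub : (∫ u in (Real.sqrt 2)..x, (2 * u) • ((fun t => 1 / Real.log t) ∘ (fun u => u ^ 2)) u)
        = ∫ t in (Real.sqrt 2 ^ 2)..(x ^ 2), 1 / Real.log t := by
      apply intervalIntegral.integral_comp_smul_deriv'
      · intro u _
        simpa [mul_comm] using (hasDerivAt_pow 2 u)
      · exact (continuous_const.mul continuous_id).continuousOn
      · apply cont1.mono
        rintro s ⟨u, hu, rfl⟩
        rw [Set.uIcc_of_le hsx] at hu
        have h1u : 1 < u := lt_of_lt_of_le hs1 hu.1
        simpa using one_lt_pow₀ h1u two_ne_zero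
    rw [hs2] at hsub
    rw [Li, ← hsub]
    apply intervalIntegral.integral_congr
    intro u hu
    rw [Set.uIcc_of_le hsx] at hu
    have h1u : 1 < u := lt_of_lt_of_le hs1 hu.1
    have hlog : Real.log (u ^ 2) = 2 * Real.log u := by
      rw [Real.log_pow]; push_cast; ring
    have hlogne : Real.log u ≠ 0 := ne_of_gt (Real.log_pos h1u)
    simp only [Function.comp, smul_eq_mul, hlog]
    field_simp
  -- Step C: split the interval
  have hsplit : (∫ u in (Real.sqrt 2)..(2:ℝ), u * (1 / Real.log u))
      + (∫ u in (2:ℝ)..x, u * (1 / Real.log u))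
      = ∫ u in (Real.sqrt 2)..x, u * (1 / Real.log u) :=
    intervalIntegral.integral_add_adjacent_intervals
      (hIntMul _ _ hs1 hsle2) (hIntMul _ _ one_lt_two hx)
  have key : (x * Li x - ∫ t in (2:ℝ)..x, Li t) - Li (x ^ 2)
      = ∫ t in (2:ℝ)..Real.sqrt 2, t * (1 / Real.log t) := by
    have h1 : x * Li x - ∫ t in (2:ℝ)..x, Li t
        = ∫ t in (2:ℝ)..x, t * (1 / Real.log t) := by
      rw [hA, hLi2]; simp
    rw [h1, hB, ← hsplit, intervalIntegral.integral_symm (Real.sqrt 2) 2]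
    ring
  rw [key]
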